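/- Let M be a ℤ-lattice in V with dual lattice M^∨ and discriminant d = [M^∨ : M], and let N ⊆ M be a primitive ℤ-submodule such that the restriction of b to the ℚ-span of N is nondegenerate. Then (N + N^⊥_{M^∨}) ∩ M = N + N^⊥, and [N^∨ : N] ≤ d · [M : N + N^⊥], where all the indices involved are finite. -/

import Mathlib

/-- Let `M` be a `ℤ`-lattice in `V` with dual lattice `M^∨` and
discriminant `d = [M^∨ : M]`, and `N ⊆ M` a primitive `ℤ`-submodule such that the
restriction of `b` to the `ℚ`-span of `N` is nondegenerate.  Then
`(N + N^⊥_{M^∨}) ∩ M = N + N^⊥` and `[N^∨ : N] ≤ d * [M : N + N^⊥]`, all the indices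
involved being finite. -/
theorem stmt3
    {V : Type*} [AddCommGroup V] [Module ℚ V] [FiniteDimensional ℚ V]
    (b : LinearMap.BilinForm ℚ V)
    (hsymm : ∀ x y : V, b x y = b y x)
    (hnd : ∀ v : V, (∀ w : V, b v w = 0) → v = 0)
    -- M is a ℤ-lattice in V
    (M : Submodule ℤ V) (hMfg : M.FG)
    (hMspan : Submodule.span ℚ (M : Set V) = ⊤)
    (hMint : ∀ x ∈ M, ∀ y ∈ M, ∃ k : ℤ, b x y = (k : ℚ))
    -- the dual lattice M^∨
    (Mdual : Submodule ℤ V)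
    (hMdual : ∀ x : V, x ∈ Mdual ↔ ∀ m ∈ M, ∃ k : ℤ, b x m = (k : ℚ))
    -- N ⊆ M primitive, with nondegenerate restriction of b to its ℚ-span
    (N : Submodule ℤ V) (hNM : N ≤ M)
    (hprim : ∀ m ∈ M, ∀ k : ℤ, k ≠ 0 → k • m ∈ N → m ∈ N)
    (hNnd : ∀ v ∈ Submodule.span ℚ (N : Set V),
      (∀ w ∈ Submodule.span ℚ (N : Set V), b v w = 0) → v = 0)
    -- N^⊥, the orthogonal complement of N inside M
    (Nperp : Submodule ℤ V)
    (hNperpdef : ∀ x : V, x ∈ Nperp ↔ x ∈ M ∧ ∀ n ∈ N, b x n = 0)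
    -- N^⊥_{M^∨}, the orthogonal complement of N inside M^∨
    (NperpMdual : Submodule ℤ V)
    (hNperpMdual : ∀ x : V, x ∈ NperpMdual ↔ x ∈ Mdual ∧ ∀ n ∈ N, b x n = 0)
    -- the natural map N → N^∨ = Hom_ℤ(N, ℤ), n ↦ (x ↦ b(x,n))
    (φ : N →ₗ[ℤ] (N →ₗ[ℤ] ℤ))
    (hφ : ∀ n x : N, ((φ n x : ℤ) : ℚ) = b (x : V) (n : V)) :
    (N ⊔ NperpMdual) ⊓ M = N ⊔ Nperp ∧
    Finite (Mdual ⧸ (M.comap Mdual.subtype)) ∧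
    Finite ((N →ₗ[ℤ] ℤ) ⧸ LinearMap.range φ) ∧
    Finite (M ⧸ ((N ⊔ Nperp).comap M.subtype)) ∧
    Nat.card ((N →ₗ[ℤ] ℤ) ⧸ LinearMap.range φ) ≤
      Nat.card (Mdual ⧸ (M.comap Mdual.subtype)) *
        Nat.card (M ⧸ ((N ⊔ Nperp).comap M.subtype)) := by
  classical
  have hbnd : b.Nondegenerate := ⟨hnd, fun y h => hnd y (fun w => by rw [hsymm]; exact h w)⟩
  have hrefl : b.IsRefl := fun x y h => by rw [hsymm]; exact h
  have hMledual : M ≤ Mdual := fun x hx => (hMdual x).mpr (fun m hm => hMint x hx m hm)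
  have hNMdual : N ≤ Mdual := fun x hx => hMledual (hNM hx)
  have hNperpM : Nperp ≤ M := fun x hx => ((hNperpdef x).mp hx).1
  have hzsmul : ∀ (k : ℤ) (x : V), k • x = (k : ℚ) • x :=
    fun k x => (Int.cast_smul_eq_zsmul ℚ k x).symm
  -- Part 1
  have part1 : (N ⊔ NperpMdual) ⊓ M = N ⊔ Nperp := by
    apply le_antisymm
    · intro x hx
      obtain ⟨hx1, hxM⟩ := Submodule.mem_inf.mp hx
      obtain ⟨n, hn, p, hp, rfl⟩ := Submodule.mem_sup.mp hx1
      have hpM : p ∈ M := by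
        have : (n + p) - n ∈ M := Submodule.sub_mem _ hxM (hNM hn)
        simpa using this
      exact Submodule.mem_sup.mpr
        ⟨n, hn, p, (hNperpdef p).mpr ⟨hpM, ((hNperpMdual p).mp hp).2⟩, rfl⟩
    · apply le_inf
      · refine sup_le le_sup_left ?_
        refine le_trans ?_ le_sup_right
        intro p hp
        exact (hNperpMdual p).mpr ⟨hMledual (hNperpM hp), ((hNperpdef p).mp hp).2⟩
      · exact sup_le hNM hNperpM
  -- torsion lemma
  have htor : ∀ (S : Submodule ℤ V), ∀ x ∈ Submodule.span ℚ (S : Set V),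
      ∃ k : ℤ, k ≠ 0 ∧ k • x ∈ S := by
    intro S x hx
    induction hx using Submodule.span_induction with
    | mem y hy => exact ⟨1, one_ne_zero, by simpa using hy⟩
    | zero => exact ⟨1, one_ne_zero, by simp⟩
    | add y z _ _ hy hz =>
      obtain ⟨k, hk, hky⟩ := hy
      obtain ⟨l, hl, hlz⟩ := hz
      refine ⟨k * l, mul_ne_zero hk hl, ?_⟩
      have h1 : (k * l) • (y + z) = l • (k • y) + k • (l • z) := by
        rw [smul_add]
        simp [smul_smul, mul_comm]
      rw [h1]
      exact S.add_mem (S.smul_mem l hky) (S.smul_mem k hlz)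
    | smul q y _ hy =>
      obtain ⟨k, hk, hky⟩ := hy
      refine ⟨k * (q.den : ℤ), mul_ne_zero hk (by exact_mod_cast q.den_nz), ?_⟩
      have h1 : (k * (q.den : ℤ)) • (q • y) = q.num • (k • y) := by
        rw [hzsmul (k * (q.den : ℤ)) (q • y), hzsmul q.num (k • y), hzsmul k y,
          smul_smul, smul_smul]
        congr 1
        push_cast
        rw [mul_assoc, mul_comm (q.den : ℚ) q, Rat.mul_den_eq_num]
        ring
      rw [h1]
      exact S.smul_mem _ hky
  have htorM : ∀ x : V, ∃ k : ℤ, k ≠ 0 ∧ k • x ∈ M := by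
    intro x
    exact htor M x (by rw [hMspan]; trivial)
  -- finite quotient lemma
  have hfin : ∀ (A B : Submodule ℤ V), A.FG → B ≤ A →
      (∀ x ∈ A, ∃ k : ℤ, k ≠ 0 ∧ k • x ∈ B) →
      Finite (A ⧸ B.comap A.subtype) := by
    intro A B hA hBA htors
    haveI : Module.Finite ℤ A := Module.Finite.iff_fg.mpr hA
    apply Module.finite_of_fg_torsion
    intro z
    obtain ⟨a, rfl⟩ := Submodule.Quotient.mk_surjective _ z
    obtain ⟨k, hk, hka⟩ := htors a.1 a.2
    refine ⟨⟨k, mem_nonZeroDivisors_of_ne_zero hk⟩, ?_⟩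
    have : (⟨k, mem_nonZeroDivisors_of_ne_zero hk⟩ : nonZeroDivisors ℤ) •
        (Submodule.Quotient.mk a : A ⧸ B.comap A.subtype)
        = Submodule.Quotient.mk (k • a) := by
      rw [Submodule.Quotient.mk_smul]
      rfl
    rw [this, Submodule.Quotient.mk_eq_zero]
    simpa using hka
  -- NoZeroSMulDivisors
  haveI : NoZeroSMulDivisors ℤ V := by
    constructor
    intro k x h
    rw [hzsmul] at h
    rcases smul_eq_zero.mp h with h | h
    · exact Or.inl (by exact_mod_cast h)
    · exact Or.inr h
  -- torsion into N ⊔ Nperp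
  have htorNperp : ∀ x ∈ M, ∃ k : ℤ, k ≠ 0 ∧ k • x ∈ N ⊔ Nperp := by
    intro m hm
    have hWnd : (b.restrict (Submodule.span ℚ (N : Set V))).Nondegenerate := by
      refine ⟨fun x hx => ?_, fun x hx => ?_⟩
      · refine Subtype.ext (hNnd x.1 x.2 ?_)
        intro w hw
        simpa using hx ⟨w, hw⟩
      · refine Subtype.ext (hNnd x.1 x.2 ?_)
        intro w hw
        rw [hsymm]
        simpa using hx ⟨w, hw⟩
    have hc : IsCompl (Submodule.span ℚ (N : Set V))
        (b.orthogonal (Submodule.span ℚ (N : Set V))) :=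
      b.isCompl_orthogonal_of_restrict_nondegenerate hrefl hWnd
    have hmem : m ∈ Submodule.span ℚ (N : Set V) ⊔
        b.orthogonal (Submodule.span ℚ (N : Set V)) := by
      rw [hc.sup_eq_top]; trivial
    obtain ⟨p, hp, q, hq, rfl⟩ := Submodule.mem_sup.mp hmem
    obtain ⟨k, hk, hkp⟩ := htor N p hp
    refine ⟨k, hk, ?_⟩
    rw [smul_add]
    refine Submodule.add_mem _ (Submodule.mem_sup_left hkp) (Submodule.mem_sup_right ?_)
    refine (hNperpdef _).mpr ⟨?_, ?_⟩
    · have h2 : k • (p + q) - k • p ∈ M :=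
        Submodule.sub_mem _ (Submodule.smul_mem _ _ hm) (hNM hkp)
      simpa [smul_add] using h2
    · intro n hn
      have hqn : b q n = 0 := by
        rw [hsymm]
        exact hq n (Submodule.subset_span hn)
      rw [hzsmul]
      simp [hqn]
  have finM : Finite (M ⧸ ((N ⊔ Nperp).comap M.subtype)) :=
    hfin M (N ⊔ Nperp) hMfg (sup_le hNM hNperpM) htorNperp
  -- Mdual is the dual submodule, hence finitely generated
  have hMdual_eq : Mdual = b.dualSubmodule M := by
    ext x
    rw [hMdual x, LinearMap.BilinForm.mem_dualSubmodule]
    constructor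
    · intro h y hy
      obtain ⟨k, hk⟩ := h y hy
      exact Submodule.mem_one.mpr ⟨k, by simpa using hk.symm⟩
    · intro h m hm
      obtain ⟨k, hk⟩ := Submodule.mem_one.mp (h m hm)
      exact ⟨k, by simpa using hk.symm⟩
  haveI : Module.Finite ℤ M := Module.Finite.iff_fg.mpr hMfg
  let e := Module.Free.chooseBasis ℤ M
  let E : Module.Free.ChooseBasisIndex ℤ M → V := fun i => ((e i : M) : V)
  have hliE : LinearIndependent ℚ E := by
    rw [← LinearIndependent.iff_fractionRing ℤ ℚ]
    exact e.linearIndependent.map' M.subtype (Submodule.ker_subtype M)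
  have hspanE : Submodule.span ℤ (Set.range E) = M := by
    apply le_antisymm
    · rw [Submodule.span_le]
      rintro _ ⟨i, rfl⟩
      exact (e i).2
    · intro x hx
      have h1 : (⟨x, hx⟩ : M) ∈ Submodule.span ℤ (Set.range e) := by
        rw [e.span_eq]; trivial
      have h2 : x ∈ Submodule.map M.subtype (Submodule.span ℤ (Set.range e)) :=
        ⟨⟨x, hx⟩, h1, rfl⟩
      rwa [Submodule.map_span, ← Set.range_comp] at h2
  have hspanEQ : ⊤ ≤ Submodule.span ℚ (Set.range E) := by
    rw [← hMspan, Submodule.span_le]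
    intro x hx
    have h1 : x ∈ Submodule.span ℤ (Set.range E) := by rw [hspanE]; exact hx
    exact Submodule.span_subset_span ℤ ℚ _ h1
  let Bv : Module.Basis (Module.Free.ChooseBasisIndex ℤ M) ℚ V := Module.Basis.mk hliE hspanEQ
  have hspanBv : Submodule.span ℤ (Set.range Bv) = M := by
    rw [Module.Basis.coe_mk]; exact hspanE
  have finDual : Mdual.FG := by
    rw [hMdual_eq, ← hspanBv, LinearMap.BilinForm.dualSubmodule_span_of_basis b hbnd Bv]
    exact Submodule.fg_span (Set.finite_range _)
  have finDualM : Finite (Mdual ⧸ (M.comap Mdual.subtype)) :=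
    hfin Mdual M finDual hMledual (fun x _ => htorM x)
  -- the map Ψ : Mdual → Hom(N, ℤ)
  have hnum_eq : ∀ (q : ℚ) (k : ℤ), q = (k : ℚ) → q.num = k := by
    rintro q k rfl; simp
  have hcast : ∀ (x : Mdual) (n : N), ((b x.1 n.1).num : ℚ) = b x.1 n.1 := by
    intro x n
    obtain ⟨k, hk⟩ := (hMdual x.1).mp x.2 n.1 (hNM n.2)
    rw [hk]; simp
  let Ψ : Mdual →ₗ[ℤ] (N →ₗ[ℤ] ℤ) :=
    { toFun := fun x =>
      { toFun := fun n => (b x.1 n.1).num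
        map_add' := by
          intro n m
          apply hnum_eq
          have h1 : ((n + m : N) : V) = (n : V) + (m : V) := rfl
          rw [h1, map_add, ← hcast x n, ← hcast x m]
          simp only [Rat.num_intCast]
          push_cast
          ring
        map_smul' := by
          intro k n
          apply hnum_eq
          have h1 : ((k • n : N) : V) = (k : ℚ) • (n : V) := by
            rw [Submodule.coe_smul, hzsmul]
          rw [h1, map_smul, ← hcast x n]
          simp only [RingHom.id_apply, zsmul_eq_mul, Rat.num_intCast, smul_eq_mul]
          push_cast
          ring }
      map_add' := by
        intro x y
        apply LinearMap.ext
        intro n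
        show (b (x + y).1 n.1).num = (b x.1 n.1).num + (b y.1 n.1).num
        apply hnum_eq
        have h1 : ((x + y : Mdual) : V) = (x : V) + (y : V) := rfl
        rw [h1, map_add, LinearMap.add_apply, ← hcast x n, ← hcast y n]
        simp only [Rat.num_intCast]
        push_cast
        ring
      map_smul' := by
        intro k x
        apply LinearMap.ext
        intro n
        show (b (k • x : Mdual).1 n.1).num = k * (b x.1 n.1).num
        apply hnum_eq
        have h1 : ((k • x : Mdual) : V) = (k : ℚ) • (x : V) := by
          rw [Submodule.coe_smul, hzsmul]
        rw [h1, map_smul, LinearMap.smul_apply, ← hcast x n]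
        simp only [Rat.num_intCast, smul_eq_mul]
        push_cast
        ring }
  have hΨapp : ∀ (x : Mdual) (n : N), Ψ x n = (b x.1 n.1).num := fun _ _ => rfl
  -- surjectivity of Ψ
  haveI : NoZeroSMulDivisors ℤ (M ⧸ (N.comap M.subtype)) := by
    constructor
    intro k z h
    by_cases hk : k = 0
    · exact Or.inl hk
    · refine Or.inr ?_
      obtain ⟨m, rfl⟩ := Submodule.Quotient.mk_surjective _ z
      rw [← Submodule.Quotient.mk_smul, Submodule.Quotient.mk_eq_zero] at h
      rw [Submodule.Quotient.mk_eq_zero]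
      have h2 : k • (m : V) ∈ N := by simpa using h
      have h3 : (m : V) ∈ N := hprim m.1 m.2 k hk h2
      simpa using h3
  obtain ⟨s, hs⟩ := Module.projective_lifting_property (N.comap M.subtype).mkQ
    (LinearMap.id) (Submodule.mkQ_surjective _)
  have hres : ∀ m : M, m - s ((N.comap M.subtype).mkQ m) ∈ N.comap M.subtype := by
    intro m
    have h1 : (N.comap M.subtype).mkQ (m - s ((N.comap M.subtype).mkQ m)) = 0 := by
      rw [map_sub]
      have h2 := LinearMap.congr_fun hs ((N.comap M.subtype).mkQ m)
      simp only [LinearMap.coe_comp, Function.comp_apply, LinearMap.id_apply] at h2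
      rw [h2, sub_self]
    rwa [Submodule.mkQ_apply, Submodule.Quotient.mk_eq_zero] at h1
  have hΨsurj : Function.Surjective Ψ := by
    intro f
    set ρ : M →ₗ[ℤ] N :=
      (Submodule.comapSubtypeEquivOfLe hNM).toLinearMap ∘ₗ
        (LinearMap.id - s ∘ₗ (N.comap M.subtype).mkQ).codRestrict (N.comap M.subtype) hres
      with hρdef
    have hρ : ∀ m : M, (ρ m : V) = (m : V) - ((s ((N.comap M.subtype).mkQ m) : M) : V) := by
      intro m
      show ((Submodule.comapSubtypeEquivOfLe hNM) _ : V) = _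
      rw [Submodule.comapSubtypeEquivOfLe_apply_coe]
      rfl
    have hρN : ∀ n : N, ρ ⟨(n : V), hNM n.2⟩ = n := by
      intro n
      apply Subtype.ext
      rw [hρ]
      have h0 : (N.comap M.subtype).mkQ ⟨(n : V), hNM n.2⟩ = 0 := by
        rw [Submodule.mkQ_apply, Submodule.Quotient.mk_eq_zero]
        simpa using n.2
      rw [h0, map_zero]
      simp
    set g : M →ₗ[ℤ] ℤ := f ∘ₗ ρ with hgdef
    set gQ : V →ₗ[ℚ] ℚ := Bv.constr ℚ (fun i => ((g (e i) : ℤ) : ℚ)) with hgQdef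
    have hagree : ∀ m : M, gQ (m : V) = ((g m : ℤ) : ℚ) := by
      intro m
      have hmaps : (LinearMap.restrictScalars ℤ gQ) ∘ₗ M.subtype
          = (Algebra.linearMap ℤ ℚ) ∘ₗ g := by
        apply Module.Basis.ext e
        intro i
        simp only [LinearMap.coe_comp, Function.comp_apply,
          LinearMap.restrictScalars_apply, Submodule.coe_subtype,
          Algebra.linearMap_apply]
        have h1 : ((e i : M) : V) = Bv i := by rw [Module.Basis.mk_apply]
        rw [h1, Module.Basis.constr_basis]
        simp [algebraMap_int_eq]
      have h2 := LinearMap.congr_fun hmaps m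
      simpa using h2
    set x : V := (b.toDual hbnd).symm gQ with hxdef
    have hx : ∀ z : V, b x z = gQ z := by
      intro z
      have h1 : b.toDual hbnd ((b.toDual hbnd).symm gQ) z = gQ z := by
        rw [LinearEquiv.apply_symm_apply]
      rw [← h1]
      rfl
    have hxMd : x ∈ Mdual := (hMdual x).mpr
      (fun m hm => ⟨g ⟨m, hm⟩, by rw [hx, hagree ⟨m, hm⟩]⟩)
    refine ⟨⟨x, hxMd⟩, ?_⟩
    apply LinearMap.ext
    intro n
    show (b x (n : V)).num = f n
    apply hnum_eq
    rw [hx, hagree ⟨(n : V), hNM n.2⟩]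
    norm_cast
    show f (ρ ⟨(n : V), hNM n.2⟩) = f n
    rw [hρN n]
  -- compatibility of Ψ with φ and with orthogonality
  have hΨN : ∀ (nv : V) (hn : nv ∈ N), Ψ ⟨nv, hNMdual hn⟩ = φ ⟨nv, hn⟩ := by
    intro nv hn
    apply LinearMap.ext
    intro m
    show (b nv (m : V)).num = φ ⟨nv, hn⟩ m
    apply hnum_eq
    rw [hsymm]
    exact (hφ ⟨nv, hn⟩ m).symm
  have hΨperp : ∀ (pv : V) (hp : pv ∈ Mdual), (∀ n ∈ N, b pv n = 0) →
      Ψ ⟨pv, hp⟩ = 0 := by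
    intro pv hp h0
    apply LinearMap.ext
    intro m
    show (b pv (m : V)).num = 0
    rw [h0 m.1 m.2]
    simp
  have hPle : ∀ z : Mdual, (z : V) ∈ N ⊔ Nperp → Ψ z ∈ LinearMap.range φ := by
    intro z hz
    obtain ⟨n, hn, p, hp, hnp⟩ := Submodule.mem_sup.mp hz
    have hzeq : z = ⟨n, hNMdual hn⟩ + ⟨p, hMledual (hNperpM hp)⟩ := by
      apply Subtype.ext
      rw [← hnp]
      rfl
    rw [hzeq, map_add, hΨN n hn,
      hΨperp p (hMledual (hNperpM hp)) (fun n' hn' => ((hNperpdef p).mp hp).2 n' hn'),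
      add_zero]
    exact ⟨⟨n, hn⟩, rfl⟩
  let q₁ : (Mdual ⧸ ((N ⊔ Nperp).comap Mdual.subtype)) →ₗ[ℤ]
      ((N →ₗ[ℤ] ℤ) ⧸ LinearMap.range φ) :=
    Submodule.liftQ _ ((LinearMap.range φ).mkQ ∘ₗ Ψ)
      (fun z hz => by
        simp only [LinearMap.mem_ker, LinearMap.coe_comp, Function.comp_apply,
          Submodule.mkQ_apply, Submodule.Quotient.mk_eq_zero]
        exact hPle z hz)
  have hq₁ : Function.Surjective q₁ := by
    intro y
    obtain ⟨f, rfl⟩ := Submodule.Quotient.mk_surjective _ y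
    obtain ⟨z, hz⟩ := hΨsurj f
    refine ⟨Submodule.Quotient.mk z, ?_⟩
    show Submodule.liftQ _ _ _ (Submodule.Quotient.mk z) = _
    rw [Submodule.liftQ_apply]
    simp only [LinearMap.coe_comp, Function.comp_apply, Submodule.mkQ_apply, hz]
  have htorP : ∀ x ∈ Mdual, ∃ k : ℤ, k ≠ 0 ∧ k • x ∈ N ⊔ Nperp := by
    intro x _
    obtain ⟨k1, hk1, hk1M⟩ := htorM x
    obtain ⟨k2, hk2, hk2P⟩ := htorNperp (k1 • x) hk1M
    exact ⟨k2 * k1, mul_ne_zero hk2 hk1, by rwa [mul_smul]⟩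
  have finP : Finite (Mdual ⧸ ((N ⊔ Nperp).comap Mdual.subtype)) :=
    hfin Mdual (N ⊔ Nperp) finDual
      (sup_le (fun x hx => hNMdual hx) (fun x hx => hMledual (hNperpM hx))) htorP
  have finφ : Finite ((N →ₗ[ℤ] ℤ) ⧸ LinearMap.range φ) := Finite.of_surjective q₁ hq₁
  -- counting
  have hcard1 : Nat.card ((N →ₗ[ℤ] ℤ) ⧸ LinearMap.range φ) ≤
      Nat.card (Mdual ⧸ ((N ⊔ Nperp).comap Mdual.subtype)) :=
    Nat.card_le_card_of_surjective q₁ hq₁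
  haveI := finDualM
  haveI := finM
  let F : (Mdual ⧸ (M.comap Mdual.subtype)) × (M ⧸ ((N ⊔ Nperp).comap M.subtype)) →
      (Mdual ⧸ ((N ⊔ Nperp).comap Mdual.subtype)) :=
    fun ac => Submodule.Quotient.mk (ac.1.out + Submodule.inclusion hMledual ac.2.out)
  have hFsurj : Function.Surjective F := by
    intro z
    obtain ⟨x, rfl⟩ := Submodule.Quotient.mk_surjective _ z
    set a : Mdual ⧸ (M.comap Mdual.subtype) := Submodule.Quotient.mk x with ha
    have hra : Submodule.Quotient.mk a.out = a := Quotient.out_eq a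
    have hxa : x - a.out ∈ M.comap Mdual.subtype := by
      rw [← Submodule.Quotient.eq, hra]
    have hxa' : ((x : V) - ((a.out : Mdual) : V)) ∈ M := by simpa using hxa
    set c : M ⧸ ((N ⊔ Nperp).comap M.subtype) :=
      Submodule.Quotient.mk (⟨(x : V) - ((a.out : Mdual) : V), hxa'⟩ : M) with hc
    have hrc : Submodule.Quotient.mk c.out = c := Quotient.out_eq c
    have h4 : c.out - ⟨(x : V) - ((a.out : Mdual) : V), hxa'⟩
        ∈ (N ⊔ Nperp).comap M.subtype := by
      rw [← Submodule.Quotient.eq, hrc]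
    have h5 : (((c.out : M) : V) - ((x : V) - ((a.out : Mdual) : V))) ∈ N ⊔ Nperp := by
      simpa using h4
    refine ⟨(a, c), ?_⟩
    show Submodule.Quotient.mk _ = Submodule.Quotient.mk x
    rw [Submodule.Quotient.eq, Submodule.mem_comap]
    have h6 : Mdual.subtype (a.out + Submodule.inclusion hMledual c.out - x)
        = ((c.out : M) : V) - ((x : V) - ((a.out : Mdual) : V)) := by
      simp only [Submodule.coe_subtype, Submodule.coe_add, Submodule.coe_sub]
      have h7 : ((Submodule.inclusion hMledual c.out : Mdual) : V) = ((c.out : M) : V) := rfl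
      rw [h7]
      abel
    rw [h6]
    exact h5
  have hcard2 : Nat.card (Mdual ⧸ ((N ⊔ Nperp).comap Mdual.subtype)) ≤
      Nat.card (Mdual ⧸ (M.comap Mdual.subtype)) *
        Nat.card (M ⧸ ((N ⊔ Nperp).comap M.subtype)) := by
    have h1 := Nat.card_le_card_of_surjective F hFsurj
    rwa [Nat.card_prod] at h1
  exact ⟨part1, finDualM, finφ, finM, le_trans hcard1 hcard2⟩
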